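/- For C > 0, the function f(x) = C/x² on [1,∞) is recursively integrable if and only if C ≤ 1/4. -/

import Mathlib

/-- `f` is recursively integrable on `[t₀, ∞)`: for some `t₁ ≥ t₀`, the differential
equation `-g′(x) = g(x)² + f(x)` has a nonnegative solution `g` on `[t₁, ∞)`. -/
def RecInt (t₀ : ℝ) (f : ℝ → ℝ) : Prop :=
  ∃ t₁ : ℝ, t₀ ≤ t₁ ∧ ∃ g : ℝ → ℝ, (∀ x, t₁ ≤ x → 0 ≤ g x) ∧
    ∀ x, t₁ ≤ x → HasDerivWithinAt g (-(g x ^ 2 + f x)) (Set.Ici t₁) x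

/-- For `C > 0`, the function `x ↦ C / x²` on `[1, ∞)` is recursively integrable iff
`C ≤ 1/4`. -/
theorem recInt_const_div_sq_iff (C : ℝ) (hC : 0 < C) :
    RecInt 1 (fun x => C / x ^ 2) ↔ C ≤ 1 / 4 := by
  constructor
  · rintro ⟨t₁, ht₁, g, hg0, hg'⟩
    by_contra hC4
    push_neg at hC4
    have ht₁0 : (0:ℝ) < t₁ := lt_of_lt_of_le one_pos ht₁
    set ε : ℝ := C - 1/4 with hε
    have hε0 : 0 < ε := by simp [hε]; linarith
    set φ : ℝ → ℝ := fun x => x * g x + ε * Real.log x with hφ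
    -- derivative of φ within Ici t₁
    have hder : ∀ x ∈ Set.Ici t₁, HasDerivWithinAt φ
        (g x + x * (-(g x ^ 2 + C / x ^ 2)) + ε * x⁻¹) (Set.Ici t₁) x := by
      intro x hx
      have hx0 : (0:ℝ) < x := lt_of_lt_of_le ht₁0 hx
      have h1 : HasDerivWithinAt (fun x => x * g x) (1 * g x + x * (-(g x ^ 2 + C / x ^ 2)))
          (Set.Ici t₁) x :=
        (hasDerivWithinAt_id x _).mul (hg' x hx)
      have h2 : HasDerivWithinAt (fun x => ε * Real.log x) (ε * x⁻¹) (Set.Ici t₁) x :=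
        ((Real.hasDerivAt_log hx0.ne').const_mul ε).hasDerivWithinAt
      have := h1.add h2
      simp only [one_mul] at this
      exact this
    have hnonpos : ∀ x ∈ Set.Ici t₁, g x + x * (-(g x ^ 2 + C / x ^ 2)) + ε * x⁻¹ ≤ 0 := by
      intro x hx
      have hx0 : (0:ℝ) < x := lt_of_lt_of_le ht₁0 hx
      have key : g x + x * (-(g x ^ 2 + C / x ^ 2)) + ε * x⁻¹
          = -(x * (g x - 1/(2*x)) ^ 2) := by
        field_simp [hε]
        ring
      rw [key]
      have : 0 ≤ x * (g x - 1/(2*x)) ^ 2 := mul_nonneg hx0.le (sq_nonneg _)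
      linarith
    have hcont : ContinuousOn φ (Set.Ici t₁) := fun x hx =>
      (hder x hx).continuousWithinAt
    have hanti : AntitoneOn φ (Set.Ici t₁) := by
      apply antitoneOn_of_hasDerivWithinAt_nonpos (convex_Ici t₁) hcont
      · intro x hx
        rw [interior_Ici] at hx ⊢
        exact (hder x (Set.Ioi_subset_Ici_self hx)).mono Set.Ioi_subset_Ici_self
      · intro x hx
        rw [interior_Ici] at hx
        exact hnonpos x (Set.Ioi_subset_Ici_self hx)
    -- choose a large x
    set M : ℝ := max t₁ (Real.exp ((φ t₁ + 1) / ε)) with hM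
    have hMt : t₁ ≤ M := le_max_left _ _
    have hM0 : (0:ℝ) < M := lt_of_lt_of_le ht₁0 hMt
    have hlog : (φ t₁ + 1) / ε ≤ Real.log M := by
      rw [← Real.log_exp ((φ t₁ + 1) / ε)]
      exact Real.log_le_log (Real.exp_pos _) (le_max_right _ _)
    have h1 : φ M ≤ φ t₁ := hanti (Set.self_mem_Ici) hMt hMt
    have h2 : φ t₁ + 1 ≤ ε * Real.log M := by
      rw [div_le_iff₀ hε0] at hlog
      linarith [hlog]
    have h3 : M * g M ≤ -1 := by
      have : M * g M = φ M - ε * Real.log M := by simp [hφ]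
      rw [this]; linarith
    have h4 : 0 ≤ M * g M := mul_nonneg hM0.le (hg0 M hMt)
    linarith
  · intro hC4
    set s : ℝ := Real.sqrt (1 - 4 * C) with hs
    have hs0 : 0 ≤ s := Real.sqrt_nonneg _
    have hs1 : s ≤ 1 := by
      have h : s ≤ Real.sqrt 1 := Real.sqrt_le_sqrt (by linarith)
      simpa using h
    have hssq : s ^ 2 = 1 - 4 * C := Real.sq_sqrt (by linarith)
    set a : ℝ := (1 - s) / 2 with ha
    have ha0 : 0 ≤ a := by rw [ha]; linarith
    have haeq : a ^ 2 + C = a := by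
      rw [ha]; nlinarith [hssq]
    refine ⟨1, le_refl 1, fun x => a / x, ?_, ?_⟩
    · intro x hx
      exact div_nonneg ha0 (by linarith)
    · intro x hx
      have hx0 : (0:ℝ) < x := lt_of_lt_of_le one_pos hx
      have h1 : HasDerivAt (fun x : ℝ => a / x) (a * (-(x ^ 2)⁻¹)) x := by
        simpa [div_eq_mul_inv] using (hasDerivAt_inv hx0.ne').const_mul a
      have heq : a * (-(x ^ 2)⁻¹) = -((a / x) ^ 2 + C / x ^ 2) := by
        have h2 : (a / x) ^ 2 + C / x ^ 2 = (a ^ 2 + C) / x ^ 2 := by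
          field_simp
        rw [h2, haeq]
        field_simp
      rw [heq] at h1
      exact h1.hasDerivWithinAt
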